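/- Let φ : ℝ³ → (−∞, ∞] be defined by φ(x) = −(Λ(x₁) + Λ(x₂) + Λ(x₃)) if x lies in the closed simplex {x ∈ ℝ³ : x₁, x₂, x₃ ≥ 0, x₁ + x₂ + x₃ = π} and φ(x) = +∞ otherwise. Then for every y ∈ ℝ³ the Fenchel dual φ*(y) = sup{⟨x, y⟩ − φ(x) : x ∈ ℝ³} equals G(y). Moreover, G : ℝ³ → ℝ is convex and C¹-smooth with ∂G/∂y_i(y) = a_i for i = 1, 2, 3, where (a₁, a₂, a₃) are the inner angles of the generalized Euclidean triangle of edge lengths e^{y₁}, e^{y₂}, e^{y₃} with a_i opposite the edge of length e^{y_i}. -/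

import Mathlib

/-- The Lobachevsky function `Λ(t) = -∫₀ᵗ log |2 sin s| ds`. -/
noncomputable def Lob (t : ℝ) : ℝ := -∫ s in (0 : ℝ)..t, Real.log |2 * Real.sin s|

/-- The inner angle, opposite the edge of length `x i`, of the generalized Euclidean
triangle of edge lengths `x 0, x 1, x 2` (clamped arccos convention). -/
noncomputable def ang (i : Fin 3) (x : Fin 3 → ℝ) : ℝ :=
  Real.arccos (((x (i + 1)) ^ 2 + (x (i + 2)) ^ 2 - (x i) ^ 2) / (2 * x (i + 1) * x (i + 2)))

/- `φ(x) = -(Λ(x₁)+Λ(x₂)+Λ(x₃))` on the closed simplex, `+∞` elsewhere. -/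
open Classical in
noncomputable def phiFn (x : Fin 3 → ℝ) : EReal :=
  if (∀ i, 0 ≤ x i) ∧ x 0 + x 1 + x 2 = Real.pi then
    ((-(Lob (x 0) + Lob (x 1) + Lob (x 2)) : ℝ) : EReal)
  else ⊤

/-- `G(y) = Σᵢ (Λ(aᵢ) + aᵢ yᵢ)`, where `aᵢ` are the inner angles of the generalized
Euclidean triangle of edge lengths `e^{y₁}, e^{y₂}, e^{y₃}`. -/
noncomputable def Gfn (y : Fin 3 → ℝ) : ℝ :=
  ∑ i : Fin 3,
    (Lob (ang i (fun m => Real.exp (y m))) + ang i (fun m => Real.exp (y m)) * y i)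

open Real MeasureTheory Set intervalIntegral Filter

set_option maxHeartbeats 1000000
section Aux



namespace LobAux

lemma neg_log_le (u : ℝ) (hu : 0 < u) : -Real.log u ≤ 2 / Real.sqrt u := by
  have hs : 0 < Real.sqrt u := Real.sqrt_pos.2 hu
  have h1 : Real.log (1 / Real.sqrt u) ≤ 1 / Real.sqrt u - 1 :=
    Real.log_le_sub_one_of_pos (by positivity)
  have h2 : Real.log (1 / Real.sqrt u) = -(Real.log u) / 2 := by
    rw [Real.log_div one_ne_zero (ne_of_gt hs), Real.log_one, Real.log_sqrt hu.le]
    ring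
  rw [h2] at h1
  have h3 : 2 / Real.sqrt u = 2 * (1 / Real.sqrt u) := by ring
  rw [h3]
  linarith

lemma abs_log_two_sin_le {s : ℝ} (h1 : 0 < s) (h2 : s < π) :
    |Real.log (|2 * Real.sin s|)| ≤ Real.log 2 + (2 / Real.sqrt s + 2 / Real.sqrt (π - s)) := by
  have hsin : 0 < Real.sin s := Real.sin_pos_of_pos_of_lt_pi h1 h2
  have habs : |2 * Real.sin s| = 2 * Real.sin s := abs_of_pos (by linarith)
  rw [habs]
  have hle2 : Real.log (2 * Real.sin s) ≤ Real.log 2 := by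
    have : 2 * Real.sin s ≤ 2 := by nlinarith [Real.sin_le_one s]
    exact Real.log_le_log (by positivity) this
  have hmin : min s (π - s) ≤ 2 * Real.sin s := by
    have hπ4 : π ≤ 4 := Real.pi_le_four
    rcases le_total s (π / 2) with h | h
    · have hj := Real.mul_le_sin h1.le h
      have key : 2 * s ≤ π * Real.sin s := by
        have := mul_le_mul_of_nonneg_left hj Real.pi_pos.le
        rw [mul_comm] at this
        field_simp at this
        linarith
      have hps : min s (π - s) ≤ s := min_le_left _ _
      nlinarith [hsin.le]
    · have h3 : (0:ℝ) ≤ π - s := by linarith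
      have h4 : π - s ≤ π / 2 := by linarith
      have hj := Real.mul_le_sin h3 h4
      rw [Real.sin_pi_sub s] at hj
      have key : 2 * (π - s) ≤ π * Real.sin s := by
        have := mul_le_mul_of_nonneg_left hj Real.pi_pos.le
        rw [mul_comm] at this
        field_simp at this
        linarith
      have hps : min s (π - s) ≤ π - s := min_le_right _ _
      nlinarith [hsin.le]
  have hlb : -(Real.log (2 * Real.sin s)) ≤ 2 / Real.sqrt s + 2 / Real.sqrt (π - s) := by
    have hmin' : 0 < min s (π - s) := lt_min h1 (by linarith)
    have hl : Real.log (min s (π - s)) ≤ Real.log (2 * Real.sin s) := Real.log_le_log hmin' hmin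
    have hcase : -Real.log (min s (π - s)) ≤ 2 / Real.sqrt s + 2 / Real.sqrt (π - s) := by
      rcases le_total s (π - s) with h | h
      · rw [min_eq_left h]
        have := neg_log_le s h1
        have h5 : (0:ℝ) ≤ 2 / Real.sqrt (π - s) := by positivity
        linarith
      · rw [min_eq_right h]
        have := neg_log_le (π - s) (by linarith)
        have h5 : (0:ℝ) ≤ 2 / Real.sqrt s := by positivity
        linarith
    linarith
  rw [abs_le]
  constructor
  · have h5 : (0:ℝ) ≤ Real.log 2 := Real.log_nonneg one_le_two
    linarith
  · have h6 : (0:ℝ) ≤ 2 / Real.sqrt s + 2 / Real.sqrt (π - s) := by positivity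
    linarith

lemma sqrt_int_left : IntervalIntegrable (fun s : ℝ => 2 / Real.sqrt s) volume 0 π := by
  have h1 : IntervalIntegrable (fun s : ℝ => 2 * s ^ (-(1/2) : ℝ)) volume 0 π :=
    (intervalIntegrable_rpow' (by norm_num)).const_mul 2
  apply h1.mono_fun ((measurable_const.div Real.continuous_sqrt.measurable).aestronglyMeasurable)
  filter_upwards [ae_restrict_mem measurableSet_uIoc] with s hs
  rw [uIoc_of_le Real.pi_pos.le] at hs
  have hs0 : 0 < s := hs.1
  have heq : (2:ℝ) / Real.sqrt s = 2 * s ^ (-(1/2) : ℝ) := by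
    rw [Real.rpow_neg hs0.le, ← Real.sqrt_eq_rpow]
    field_simp
  show ‖2 / Real.sqrt s‖ ≤ ‖2 * s ^ (-(1/2) : ℝ)‖
  rw [heq]

lemma sqrt_int_right : IntervalIntegrable (fun s : ℝ => 2 / Real.sqrt (π - s)) volume 0 π := by
  have h := (sqrt_int_left.comp_sub_left π)
  simpa using h.symm

lemma boundInt : IntervalIntegrable
    (fun s => Real.log 2 + (2 / Real.sqrt s + 2 / Real.sqrt (π - s))) volume 0 π :=
  (_root_.intervalIntegrable_const).add (sqrt_int_left.add sqrt_int_right)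

lemma logsin_integrable : IntervalIntegrable (fun s => Real.log (|2 * Real.sin s|)) volume 0 π := by
  apply boundInt.mono_fun
    ((Real.measurable_log.comp ((measurable_sin.const_mul 2).abs)).aestronglyMeasurable)
  filter_upwards [ae_restrict_mem measurableSet_uIoc] with s hs
  rw [uIoc_of_le Real.pi_pos.le] at hs
  rcases eq_or_lt_of_le hs.2 with h | h
  · subst h
    simp [Function.comp, Real.sin_pi, Real.norm_eq_abs]
  · calc ‖Real.log (|2 * Real.sin s|)‖ = |Real.log (|2 * Real.sin s|)| := Real.norm_eq_abs _
      _ ≤ Real.log 2 + (2 / Real.sqrt s + 2 / Real.sqrt (π - s)) := abs_log_two_sin_le hs.1 h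
      _ ≤ ‖Real.log 2 + (2 / Real.sqrt s + 2 / Real.sqrt (π - s))‖ := le_abs_self _

lemma logsin_integrable' {a b : ℝ} (ha : a ∈ Icc (0:ℝ) π) (hb : b ∈ Icc (0:ℝ) π) :
    IntervalIntegrable (fun s => Real.log (|2 * Real.sin s|)) volume a b := by
  apply logsin_integrable.mono_set
  rw [Set.uIcc_of_le Real.pi_pos.le]
  exact Set.uIcc_subset_Icc ha hb

end LobAux

namespace LobAux
lemma lob_continuousOn : ContinuousOn Lob (Icc 0 π) := by
  have h0 : (0:ℝ) ∈ Icc (0:ℝ) π := ⟨le_refl _, Real.pi_pos.le⟩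
  have hπ : (π:ℝ) ∈ Icc (0:ℝ) π := ⟨Real.pi_pos.le, le_refl _⟩
  have h := intervalIntegral.continuousOn_primitive_interval'
    (logsin_integrable' h0 hπ) (Set.left_mem_uIcc)
  have huIcc : Set.uIcc (0:ℝ) π = Icc 0 π := Set.uIcc_of_le Real.pi_pos.le
  rw [huIcc] at h
  exact h.neg

lemma logsin_continuousAt {t : ℝ} (h1 : 0 < Real.sin t) :
    ContinuousAt (fun s => Real.log (|2 * Real.sin s|)) t := by
  apply ContinuousAt.log
  · exact (continuous_abs.comp (continuous_const.mul continuous_sin)).continuousAt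
  · simp only [abs_ne_zero]
    positivity

lemma lob_hasDerivAt {t : ℝ} (ht : t ∈ Ioo 0 π) :
    HasDerivAt Lob (-Real.log (2 * Real.sin t)) t := by
  have hsin : 0 < Real.sin t := Real.sin_pos_of_pos_of_lt_pi ht.1 ht.2
  have hint : IntervalIntegrable (fun s => Real.log (|2 * Real.sin s|)) volume 0 t :=
    logsin_integrable' ⟨le_refl _, Real.pi_pos.le⟩ ⟨ht.1.le, ht.2.le⟩
  have hmeas : StronglyMeasurableAtFilter (fun s => Real.log (|2 * Real.sin s|)) (nhds t)
      volume :=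
    ⟨Set.univ, Filter.univ_mem,
      ((Real.measurable_log.comp ((measurable_sin.const_mul 2).abs)).aestronglyMeasurable)⟩
  have h := intervalIntegral.integral_hasDerivAt_right hint hmeas (logsin_continuousAt hsin)
  have h2 := h.neg
  have : |2 * Real.sin t| = 2 * Real.sin t := abs_of_pos (by linarith)
  rw [this] at h2
  exact h2

lemma neglog_hasDerivAt {t : ℝ} (ht : t ∈ Ioo 0 π) :
    HasDerivAt (fun s => -Real.log (2 * Real.sin s)) (-(Real.cos t / Real.sin t)) t := by
  have hsin : 0 < Real.sin t := Real.sin_pos_of_pos_of_lt_pi ht.1 ht.2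
  have h1 : HasDerivAt (fun s => 2 * Real.sin s) (2 * Real.cos t) t :=
    (Real.hasDerivAt_sin t).const_mul 2
  have h2 := (h1.log (by positivity)).neg
  convert h2 using 1
  case e'_9 => rw [mul_div_mul_left _ _ (two_ne_zero' ℝ)]
  all_goals rfl
end LobAux


noncomputable def angR (a b c : ℝ) : ℝ := Real.arccos ((b^2 + c^2 - a^2) / (2*b*c))

noncomputable def Hn (p q r : ℝ) : ℝ := (p+q+r)*(q+r-p)*(r+p-q)*(p+q-r)

namespace AngAux

variable {p q r : ℝ}

lemma angR_comm (a b c : ℝ) : angR a b c = angR a c b := by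
  unfold angR
  congr 1
  rcases eq_or_ne b 0 with hb | hb
  · rcases eq_or_ne c 0 with hc | hc
    · rw [hb, hc]
    · rw [hb]; ring_nf
  · rcases eq_or_ne c 0 with hc | hc
    · rw [hc]; ring_nf
    · field_simp; ring

lemma angR_mem : angR p q r ∈ Icc 0 π := ⟨Real.arccos_nonneg _, Real.arccos_le_pi _⟩

section NonDeg
variable (hp : 0 < p) (hq : 0 < q) (hr : 0 < r)
  (h1 : p < q + r) (h2 : q < r + p) (h3 : r < p + q)

include hp hq hr h1 h2 h3

lemma Hn_pos : 0 < Hn p q r := by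
  unfold Hn
  have : 0 < p + q + r := by linarith
  apply mul_pos (mul_pos (mul_pos this (by linarith)) (by linarith)) (by linarith)

lemma arg_lt_one : (q^2 + r^2 - p^2) / (2*q*r) < 1 := by
  rw [div_lt_one (by positivity)]
  nlinarith

lemma neg_one_lt_arg : -1 < (q^2 + r^2 - p^2) / (2*q*r) := by
  rw [lt_div_iff₀ (by positivity)]
  nlinarith

lemma cos_angR : Real.cos (angR p q r) = (q^2 + r^2 - p^2) / (2*q*r) :=
  Real.cos_arccos (neg_one_lt_arg hp hq hr h1 h2 h3).le (arg_lt_one hp hq hr h1 h2 h3).le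

lemma sin_angR : Real.sin (angR p q r) = Real.sqrt (Hn p q r) / (2*q*r) := by
  unfold angR
  rw [Real.sin_arccos]
  have harg : 1 - ((q^2 + r^2 - p^2) / (2*q*r))^2 = Hn p q r / (2*q*r)^2 := by
    unfold Hn; field_simp; ring
  rw [harg, Real.sqrt_div (Hn_pos hp hq hr h1 h2 h3).le, Real.sqrt_sq (by positivity)]

lemma angR_mem_Ioo : angR p q r ∈ Ioo 0 π := by
  constructor
  · exact Real.arccos_pos.2 (arg_lt_one hp hq hr h1 h2 h3)
  · rcases lt_or_eq_of_le (Real.arccos_le_pi ((q^2 + r^2 - p^2) / (2*q*r))) with h | h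
    · exact h
    · exfalso
      have := Real.arccos_eq_pi.1 h
      linarith [neg_one_lt_arg hp hq hr h1 h2 h3]

lemma sin_angR_pos : 0 < Real.sin (angR p q r) := by
  rw [sin_angR hp hq hr h1 h2 h3]
  have := Hn_pos hp hq hr h1 h2 h3
  positivity

lemma log_two_sin_angR :
    Real.log (2 * Real.sin (angR p q r)) =
      Real.log p - Real.log (p*q*r / Real.sqrt (Hn p q r)) := by
  have hH := Hn_pos hp hq hr h1 h2 h3
  have hsH : 0 < Real.sqrt (Hn p q r) := Real.sqrt_pos.2 hH
  rw [sin_angR hp hq hr h1 h2 h3]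
  rw [show 2 * (Real.sqrt (Hn p q r) / (2*q*r)) = Real.sqrt (Hn p q r) / (q*r) by
    field_simp]
  rw [Real.log_div hsH.ne' (by positivity), Real.log_div (by positivity) hsH.ne',
    Real.log_mul (mul_ne_zero hp.ne' hq.ne') hr.ne', Real.log_mul hp.ne' hq.ne',
    Real.log_mul hq.ne' hr.ne']
  ring

end NonDeg

lemma angR_sum (hp : 0 < p) (hq : 0 < q) (hr : 0 < r)
    (h1 : p < q + r) (h2 : q < r + p) (h3 : r < p + q) :
    angR p q r + angR q r p + angR r p q = π := by
  have hH := Hn_pos hp hq hr h1 h2 h3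
  have hHqrp : Hn q r p = Hn p q r := by unfold Hn; ring
  have hHrpq : Hn r p q = Hn p q r := by unfold Hn; ring
  set a1 := angR p q r with ha1
  set a2 := angR q r p with ha2
  have hs1 : Real.sin a1 = Real.sqrt (Hn p q r) / (2*q*r) := sin_angR hp hq hr h1 h2 h3
  have hs2 : Real.sin a2 = Real.sqrt (Hn p q r) / (2*r*p) := by
    rw [ha2, sin_angR hq hr hp (by linarith) (by linarith) (by linarith), hHqrp]
  have hc1 : Real.cos a1 = (q^2 + r^2 - p^2) / (2*q*r) := cos_angR hp hq hr h1 h2 h3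
  have hc2 : Real.cos a2 = (r^2 + p^2 - q^2) / (2*r*p) := by
    rw [ha2]; exact cos_angR hq hr hp (by linarith) (by linarith) (by linarith)
  have hm1 := angR_mem_Ioo hp hq hr h1 h2 h3
  have hm2 : a2 ∈ Ioo 0 π := by
    rw [ha2]; exact angR_mem_Ioo hq hr hp (by linarith) (by linarith) (by linarith)
  -- sin (a1 + a2) = √H / (2*p*q) > 0
  have hsin12 : Real.sin (a1 + a2) = Real.sqrt (Hn p q r) / (2*p*q) := by
    rw [Real.sin_add, hs1, hs2, hc1, hc2]
    field_simp
    ring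
  have hsin12pos : 0 < Real.sin (a1 + a2) := by rw [hsin12]; positivity
  have hlt : a1 + a2 < π := by
    by_contra hcon
    push_neg at hcon
    have hub : a1 + a2 - π ∈ Icc 0 π := ⟨by linarith, by linarith [hm1.2, hm2.2]⟩
    have hshift := Real.sin_add_pi (a1 + a2 - π)
    rw [sub_add_cancel] at hshift
    have h0 : 0 ≤ Real.sin (a1 + a2 - π) := Real.sin_nonneg_of_mem_Icc hub
    linarith
  -- cos (π - a1 - a2) = arg of angR r p q
  have hmul : Real.sqrt (Hn p q r) * Real.sqrt (Hn p q r) = Hn p q r :=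
    Real.mul_self_sqrt hH.le
  have e1 : Real.sin a1 * Real.sin a2 = Hn p q r / (4*p*q*r^2) := by
    rw [hs1, hs2, div_mul_div_comm, hmul]
    congr 1
    ring
  have hcos3 : Real.cos (π - (a1 + a2)) = (p^2 + q^2 - r^2) / (2*p*q) := by
    rw [Real.cos_pi_sub, Real.cos_add, e1, hc1, hc2]
    unfold Hn
    field_simp
    ring
  have : angR r p q = π - (a1 + a2) := by
    rw [show angR r p q = Real.arccos ((p^2 + q^2 - r^2) / (2*p*q)) from rfl, ← hcos3,
      Real.arccos_cos (by linarith) (by linarith [hm1.1, hm2.1])]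
  rw [this]; ring

lemma angR_deg (hq : 0 < q) (hr : 0 < r) (hdeg : q + r ≤ p) :
    angR p q r = π ∧ angR q r p = 0 ∧ angR r p q = 0 := by
  have hp : 0 < p := by linarith
  refine ⟨?_, ?_, ?_⟩
  · apply Real.arccos_eq_pi.2
    rw [div_le_iff₀ (by positivity)]
    nlinarith
  · apply Real.arccos_eq_zero.2
    rw [le_div_iff₀ (by positivity)]
    nlinarith
  · apply Real.arccos_eq_zero.2
    rw [le_div_iff₀ (by positivity)]
    nlinarith

end AngAux


namespace LobAux
lemma cot_sos {t1 t2 t3 u1 u2 u3 : ℝ} (h1 : t1 ∈ Ioo 0 π) (h2 : t2 ∈ Ioo 0 π)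
    (h3 : t3 ∈ Ioo 0 π) (hsum : t1 + t2 + t3 = π) (husum : u1 + u2 + u3 = 0) :
    0 ≤ Real.cos t1 / Real.sin t1 * u1^2 + Real.cos t2 / Real.sin t2 * u2^2 +
        Real.cos t3 / Real.sin t3 * u3^2 := by
  have s1 : 0 < Real.sin t1 := Real.sin_pos_of_pos_of_lt_pi h1.1 h1.2
  have s2 : 0 < Real.sin t2 := Real.sin_pos_of_pos_of_lt_pi h2.1 h2.2
  have s3 : 0 < Real.sin t3 := Real.sin_pos_of_pos_of_lt_pi h3.1 h3.2
  have ht3 : t3 = π - (t1 + t2) := by linarith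
  have hu3 : u3 = -(u1 + u2) := by linarith
  have key : 0 ≤ Real.cos t1 * Real.sin t2 * Real.sin t3 * u1^2 +
      Real.cos t2 * Real.sin t1 * Real.sin t3 * u2^2 +
      Real.cos t3 * Real.sin t1 * Real.sin t2 * u3^2 := by
    rw [ht3, hu3, Real.cos_pi_sub, Real.sin_pi_sub, Real.cos_add, Real.sin_add]
    nlinarith [sq_nonneg (Real.cos t1 * Real.sin t2 * u1 - Real.cos t2 * Real.sin t1 * u2),
      sq_nonneg (Real.sin t1 * Real.sin t2 * (u1 + u2))]
  have heq : Real.cos t1 / Real.sin t1 * u1^2 + Real.cos t2 / Real.sin t2 * u2^2 +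
      Real.cos t3 / Real.sin t3 * u3^2 =
      (Real.cos t1 * Real.sin t2 * Real.sin t3 * u1^2 +
        Real.cos t2 * Real.sin t1 * Real.sin t3 * u2^2 +
        Real.cos t3 * Real.sin t1 * Real.sin t2 * u3^2) /
        (Real.sin t1 * Real.sin t2 * Real.sin t3) := by
    field_simp
  rw [heq]
  exact div_nonneg key (by positivity)

lemma seg_mem_Ioo {a x t : ℝ} (ha : a ∈ Ioo 0 π) (hx : x ∈ Icc 0 π) (ht : t ∈ Ico 0 1) :
    a + t * (x - a) ∈ Ioo 0 π := by
  have h1 : 0 < (1 - t) * a := mul_pos (by linarith [ht.2]) ha.1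
  have h2 : 0 ≤ t * x := mul_nonneg ht.1 hx.1
  have h3 : (1 - t) * a < (1 - t) * π := by
    apply mul_lt_mul_of_pos_left ha.2 (by linarith [ht.2])
  have h4 : t * x ≤ t * π := mul_le_mul_of_nonneg_left hx.2 ht.1
  constructor <;> nlinarith

lemma seg_mem_Icc {a x t : ℝ} (ha : a ∈ Ioo 0 π) (hx : x ∈ Icc 0 π) (ht : t ∈ Icc 0 1) :
    a + t * (x - a) ∈ Icc 0 π := by
  have h1 : 0 ≤ (1 - t) * a := mul_nonneg (by linarith [ht.2]) ha.1.le
  have h2 : 0 ≤ t * x := mul_nonneg ht.1 hx.1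
  have h3 : (1 - t) * a ≤ (1 - t) * π := mul_le_mul_of_nonneg_left ha.2.le (by linarith [ht.2])
  have h4 : t * x ≤ t * π := mul_le_mul_of_nonneg_left hx.2 ht.1
  constructor <;> nlinarith

lemma aff_hasDerivAt (a u t : ℝ) : HasDerivAt (fun t => a + t * u) u t := by
  simpa using ((hasDerivAt_id t).mul_const u).const_add a

lemma comp1_hasDeriv {a x : ℝ} (ha : a ∈ Ioo 0 π) (hx : x ∈ Icc 0 π) {t : ℝ}
    (ht : t ∈ Ico 0 1) :
    HasDerivAt (fun t => Lob (a + t * (x - a)))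
      (-Real.log (2 * Real.sin (a + t * (x - a))) * (x - a)) t :=
  by have h := (lob_hasDerivAt (seg_mem_Ioo ha hx ht)).comp t (aff_hasDerivAt a (x - a) t)
     exact h

lemma comp2_hasDeriv {a x : ℝ} (ha : a ∈ Ioo 0 π) (hx : x ∈ Icc 0 π) {t : ℝ}
    (ht : t ∈ Ico 0 1) :
    HasDerivAt (fun t => -Real.log (2 * Real.sin (a + t * (x - a))))
      (-(Real.cos (a + t * (x - a)) / Real.sin (a + t * (x - a))) * (x - a)) t :=
  by have h := (neglog_hasDerivAt (seg_mem_Ioo ha hx ht)).comp t (aff_hasDerivAt a (x - a) t)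
     exact h

lemma comp1_cont {a x : ℝ} (ha : a ∈ Ioo 0 π) (hx : x ∈ Icc 0 π) :
    ContinuousOn (fun t => Lob (a + t * (x - a))) (Icc 0 1) := by
  apply lob_continuousOn.comp (Continuous.continuousOn (by continuity))
  intro t ht
  exact seg_mem_Icc ha hx ht

lemma comp2_cont {a x : ℝ} (ha : a ∈ Ioo 0 π) (hx : x ∈ Icc 0 π) :
    ContinuousOn (fun t => -Real.log (2 * Real.sin (a + t * (x - a)))) (Ico 0 1) := by
  apply ContinuousOn.neg
  apply ContinuousOn.log (Continuous.continuousOn (by continuity))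
  intro t ht
  have := Real.sin_pos_of_pos_of_lt_pi (seg_mem_Ioo ha hx ht).1 (seg_mem_Ioo ha hx ht).2
  positivity

end LobAux


namespace LobAux
lemma key_core (y1 y2 y3 x1 x2 x3 a1 a2 a3 c : ℝ)
    (ha1 : a1 ∈ Ioo 0 π) (ha2 : a2 ∈ Ioo 0 π) (ha3 : a3 ∈ Ioo 0 π)
    (hasum : a1 + a2 + a3 = π)
    (hl1 : Real.log (2 * Real.sin a1) = y1 - c)
    (hl2 : Real.log (2 * Real.sin a2) = y2 - c)
    (hl3 : Real.log (2 * Real.sin a3) = y3 - c)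
    (hx1 : 0 ≤ x1) (hx2 : 0 ≤ x2) (hx3 : 0 ≤ x3) (hxs : x1 + x2 + x3 = π) :
    Lob x1 + Lob x2 + Lob x3 + (x1*y1 + x2*y2 + x3*y3) ≤
      Lob a1 + Lob a2 + Lob a3 + (a1*y1 + a2*y2 + a3*y3) := by
  have hx1' : x1 ∈ Icc 0 π := ⟨hx1, by linarith⟩
  have hx2' : x2 ∈ Icc 0 π := ⟨hx2, by linarith⟩
  have hx3' : x3 ∈ Icc 0 π := ⟨hx3, by linarith⟩
  set F : ℝ → ℝ := fun t =>
    Lob (a1 + t * (x1 - a1)) + Lob (a2 + t * (x2 - a2)) + Lob (a3 + t * (x3 - a3)) +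
      ((a1 + t * (x1 - a1)) * y1 + (a2 + t * (x2 - a2)) * y2 + (a3 + t * (x3 - a3)) * y3)
    with hFdef
  set F1 : ℝ → ℝ := fun t =>
    -Real.log (2 * Real.sin (a1 + t * (x1 - a1))) * (x1 - a1) +
      -Real.log (2 * Real.sin (a2 + t * (x2 - a2))) * (x2 - a2) +
      -Real.log (2 * Real.sin (a3 + t * (x3 - a3))) * (x3 - a3) +
      ((x1 - a1) * y1 + (x2 - a2) * y2 + (x3 - a3) * y3) with hF1def
  have husum : (x1 - a1) + (x2 - a2) + (x3 - a3) = 0 := by linarith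
  have hFderiv : ∀ t ∈ Ico (0:ℝ) 1, HasDerivAt F (F1 t) t := by
    intro t ht
    have h := (((comp1_hasDeriv ha1 hx1' ht).add (comp1_hasDeriv ha2 hx2' ht)).add
        (comp1_hasDeriv ha3 hx3' ht)).add
      ((((aff_hasDerivAt a1 (x1 - a1) t).mul_const y1).add
        ((aff_hasDerivAt a2 (x2 - a2) t).mul_const y2)).add
        ((aff_hasDerivAt a3 (x3 - a3) t).mul_const y3))
    convert h using 1
    all_goals rfl
  have hF1deriv : ∀ t ∈ Ioo (0:ℝ) 1, HasDerivAt F1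
      (-(Real.cos (a1 + t * (x1 - a1)) / Real.sin (a1 + t * (x1 - a1)) * (x1 - a1)^2 +
         Real.cos (a2 + t * (x2 - a2)) / Real.sin (a2 + t * (x2 - a2)) * (x2 - a2)^2 +
         Real.cos (a3 + t * (x3 - a3)) / Real.sin (a3 + t * (x3 - a3)) * (x3 - a3)^2)) t := by
    intro t ht
    have ht' : t ∈ Ico (0:ℝ) 1 := ⟨ht.1.le, ht.2⟩
    have h := ((((comp2_hasDeriv ha1 hx1' ht').mul_const (x1 - a1)).add
        ((comp2_hasDeriv ha2 hx2' ht').mul_const (x2 - a2))).add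
        ((comp2_hasDeriv ha3 hx3' ht').mul_const (x3 - a3))).add
      (hasDerivAt_const t ((x1 - a1) * y1 + (x2 - a2) * y2 + (x3 - a3) * y3))
    convert h using 1
    case e'_9 => ring
    all_goals rfl
  have hF1cont : ContinuousOn F1 (Ico 0 1) := by
    apply ContinuousOn.add
    · exact (((comp2_cont ha1 hx1').mul continuousOn_const).add
        ((comp2_cont ha2 hx2').mul continuousOn_const)).add
        ((comp2_cont ha3 hx3').mul continuousOn_const)
    · exact continuousOn_const
  -- F1 is antitone on [0,1)
  have hF1anti : AntitoneOn F1 (Ico 0 1) := by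
    apply antitoneOn_of_deriv_nonpos (convex_Ico 0 1) hF1cont
    · intro t ht
      rw [interior_Ico] at ht
      exact (hF1deriv t ht).differentiableAt.differentiableWithinAt
    · intro t ht
      rw [interior_Ico] at ht
      rw [(hF1deriv t ht).deriv]
      have ht' : t ∈ Ico (0:ℝ) 1 := ⟨ht.1.le, ht.2⟩
      have hsum3 : (a1 + t * (x1 - a1)) + (a2 + t * (x2 - a2)) + (a3 + t * (x3 - a3)) = π := by
        have : a1 + a2 + a3 + t * ((x1 - a1) + (x2 - a2) + (x3 - a3)) =
            (a1 + t * (x1 - a1)) + (a2 + t * (x2 - a2)) + (a3 + t * (x3 - a3)) := by ring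
        rw [← this, husum]
        simp [hasum]
      have := cot_sos (seg_mem_Ioo ha1 hx1' ht') (seg_mem_Ioo ha2 hx2' ht')
        (seg_mem_Ioo ha3 hx3' ht') hsum3 husum
      linarith
  have hF10 : F1 0 = 0 := by
    simp only [hF1def, zero_mul, add_zero, mul_zero]
    rw [hl1, hl2, hl3]
    linear_combination c * husum
  have hF1nonpos : ∀ t ∈ Ioo (0:ℝ) 1, F1 t ≤ 0 := by
    intro t ht
    have := hF1anti (show (0:ℝ) ∈ Ico (0:ℝ) 1 by constructor <;> norm_num)
      (show t ∈ Ico (0:ℝ) 1 from ⟨ht.1.le, ht.2⟩) ht.1.le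
    linarith [hF10 ▸ this]
  have hFcont : ContinuousOn F (Icc 0 1) := by
    apply ContinuousOn.add
    · exact ((comp1_cont ha1 hx1').add (comp1_cont ha2 hx2')).add (comp1_cont ha3 hx3')
    · refine Continuous.continuousOn ?_
      exact (((continuous_const.add (continuous_id.mul continuous_const)).mul
        continuous_const).add ((continuous_const.add
        (continuous_id.mul continuous_const)).mul continuous_const)).add
        ((continuous_const.add (continuous_id.mul continuous_const)).mul continuous_const)
  have hFanti : AntitoneOn F (Icc 0 1) := by
    apply antitoneOn_of_deriv_nonpos (convex_Icc 0 1) hFcont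
    · intro t ht
      rw [interior_Icc] at ht
      exact (hFderiv t ⟨ht.1.le, ht.2⟩).differentiableAt.differentiableWithinAt
    · intro t ht
      rw [interior_Icc] at ht
      rw [(hFderiv t ⟨ht.1.le, ht.2⟩).deriv]
      exact hF1nonpos t ht
  have h01 := hFanti (show (0:ℝ) ∈ Icc (0:ℝ) 1 by constructor <;> norm_num)
    (show (1:ℝ) ∈ Icc (0:ℝ) 1 by constructor <;> norm_num) zero_le_one
  have hF1eq : F 1 = Lob x1 + Lob x2 + Lob x3 + (x1*y1 + x2*y2 + x3*y3) := by
    simp only [hFdef, one_mul]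
    rw [show a1 + (x1 - a1) = x1 by ring, show a2 + (x2 - a2) = x2 by ring,
      show a3 + (x3 - a3) = x3 by ring]
  have hF0eq : F 0 = Lob a1 + Lob a2 + Lob a3 + (a1*y1 + a2*y2 + a3*y3) := by
    simp only [hFdef, zero_mul, add_zero, mul_zero]
  rw [hF1eq, hF0eq] at h01
  exact h01
end LobAux



open AngAux LobAux

noncomputable def GR (y1 y2 y3 : ℝ) : ℝ :=
  Lob (angR (Real.exp y1) (Real.exp y2) (Real.exp y3)) +
  Lob (angR (Real.exp y2) (Real.exp y3) (Real.exp y1)) +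
  Lob (angR (Real.exp y3) (Real.exp y1) (Real.exp y2)) +
  (angR (Real.exp y1) (Real.exp y2) (Real.exp y3) * y1 +
   angR (Real.exp y2) (Real.exp y3) (Real.exp y1) * y2 +
   angR (Real.exp y3) (Real.exp y1) (Real.exp y2) * y3)

namespace KeyAux

lemma GR_cyc (y1 y2 y3 : ℝ) : GR y1 y2 y3 = GR y2 y3 y1 := by
  unfold GR
  ring

lemma cont_angR_comp {α : Type*} [TopologicalSpace α] {f g h : α → ℝ}
    (hf : Continuous f) (hg : Continuous g) (hh : Continuous h)
    (hgpos : ∀ a, 0 < g a) (hhpos : ∀ a, 0 < h a) :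
    Continuous (fun a => angR (f a) (g a) (h a)) := by
  apply Real.continuous_arccos.comp
  apply Continuous.div (by fun_prop) (by fun_prop)
  intro a
  have := hgpos a
  have := hhpos a
  positivity

lemma cont_Lob_comp {α : Type*} [TopologicalSpace α] {f : α → ℝ}
    (hf : Continuous f) (hmem : ∀ a, f a ∈ Icc 0 π) :
    Continuous (fun a => Lob (f a)) := by
  rw [← continuousOn_univ]
  exact lob_continuousOn.comp hf.continuousOn (fun a _ => hmem a)

lemma key_nondeg (y1 y2 y3 x1 x2 x3 : ℝ)
    (hx1 : 0 ≤ x1) (hx2 : 0 ≤ x2) (hx3 : 0 ≤ x3) (hxs : x1 + x2 + x3 = π)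
    (hd1 : Real.exp y1 < Real.exp y2 + Real.exp y3)
    (hd2 : Real.exp y2 < Real.exp y3 + Real.exp y1)
    (hd3 : Real.exp y3 < Real.exp y1 + Real.exp y2) :
    Lob x1 + Lob x2 + Lob x3 + (x1*y1 + x2*y2 + x3*y3) ≤ GR y1 y2 y3 := by
  set p := Real.exp y1 with hpd
  set q := Real.exp y2 with hqd
  set r := Real.exp y3 with hrd
  have hp : 0 < p := Real.exp_pos y1
  have hq : 0 < q := Real.exp_pos y2
  have hr : 0 < r := Real.exp_pos y3
  have hH := Hn_pos hp hq hr hd1 hd2 hd3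
  have hHq : Hn q r p = Hn p q r := by unfold Hn; ring
  have hHr : Hn r p q = Hn p q r := by unfold Hn; ring
  have hl1 : Real.log (2 * Real.sin (angR p q r)) =
      y1 - Real.log (p*q*r / Real.sqrt (Hn p q r)) := by
    rw [log_two_sin_angR hp hq hr hd1 hd2 hd3, hpd, Real.log_exp]
  have hl2 : Real.log (2 * Real.sin (angR q r p)) =
      y2 - Real.log (p*q*r / Real.sqrt (Hn p q r)) := by
    rw [log_two_sin_angR hq hr hp hd2 hd3 hd1, hqd, Real.log_exp, hHq,
      show q*r*p = p*q*r by ring]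
  have hl3 : Real.log (2 * Real.sin (angR r p q)) =
      y3 - Real.log (p*q*r / Real.sqrt (Hn p q r)) := by
    rw [log_two_sin_angR hr hp hq hd3 hd1 hd2, hrd, Real.log_exp, hHr,
      show r*p*q = p*q*r by ring]
  exact key_core y1 y2 y3 x1 x2 x3 _ _ _ _
    (angR_mem_Ioo hp hq hr hd1 hd2 hd3) (angR_mem_Ioo hq hr hp hd2 hd3 hd1)
    (angR_mem_Ioo hr hp hq hd3 hd1 hd2) (angR_sum hp hq hr hd1 hd2 hd3)
    hl1 hl2 hl3 hx1 hx2 hx3 hxs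

lemma cont_GR_left (y2 y3 : ℝ) : Continuous (fun s => GR s y2 y3) := by
  have hq : ∀ s : ℝ, 0 < Real.exp y2 := fun _ => Real.exp_pos _
  have hr : ∀ s : ℝ, 0 < Real.exp y3 := fun _ => Real.exp_pos _
  have hp : ∀ s : ℝ, 0 < Real.exp s := fun s => Real.exp_pos s
  have c1 : Continuous (fun s : ℝ => angR (Real.exp s) (Real.exp y2) (Real.exp y3)) :=
    cont_angR_comp Real.continuous_exp continuous_const continuous_const hq hr
  have c2 : Continuous (fun s : ℝ => angR (Real.exp y2) (Real.exp y3) (Real.exp s)) :=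
    cont_angR_comp continuous_const continuous_const Real.continuous_exp hr hp
  have c3 : Continuous (fun s : ℝ => angR (Real.exp y3) (Real.exp s) (Real.exp y2)) :=
    cont_angR_comp continuous_const Real.continuous_exp continuous_const hp hq
  unfold GR
  apply Continuous.add
  · exact ((cont_Lob_comp c1 (fun _ => angR_mem)).add
      (cont_Lob_comp c2 (fun _ => angR_mem))).add (cont_Lob_comp c3 (fun _ => angR_mem))
  · exact ((c1.mul continuous_id).add (c2.mul continuous_const)).add (c3.mul continuous_const)

lemma key_deg1 (y1 y2 y3 x1 x2 x3 : ℝ)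
    (hx1 : 0 ≤ x1) (hx2 : 0 ≤ x2) (hx3 : 0 ≤ x3) (hxs : x1 + x2 + x3 = π)
    (hdeg : Real.exp y2 + Real.exp y3 ≤ Real.exp y1) :
    Lob x1 + Lob x2 + Lob x3 + (x1*y1 + x2*y2 + x3*y3) ≤ GR y1 y2 y3 := by
  set q := Real.exp y2 with hqd
  set r := Real.exp y3 with hrd
  have hq : 0 < q := Real.exp_pos y2
  have hr : 0 < r := Real.exp_pos y3
  set s0 := Real.log (q + r) with hs0d
  have he : Real.exp s0 = q + r := Real.exp_log (by positivity)
  -- value of GR at any s with q + r ≤ exp s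
  have hGR : ∀ s : ℝ, q + r ≤ Real.exp s → GR s y2 y3 = Lob π + Lob 0 + Lob 0 + π * s := by
    intro s hs
    obtain ⟨e1, e2, e3⟩ := angR_deg (p := Real.exp s) hq hr hs
    unfold GR
    rw [← hqd, ← hrd, e1, e2, e3]
    ring
  -- Step B : the boundary case
  have hB : Lob x1 + Lob x2 + Lob x3 + (x1*s0 + x2*y2 + x3*y3) ≤ GR s0 y2 y3 := by
    have hev : ∀ᶠ s in nhdsWithin s0 (Iio s0),
        Lob x1 + Lob x2 + Lob x3 + (x1*s + x2*y2 + x3*y3) ≤ GR s y2 y3 := by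
      have t2 : Tendsto (fun s => r + Real.exp s) (nhds s0) (nhds (r + (q + r))) := by
        rw [← he]; exact (continuous_const.add Real.continuous_exp).tendsto s0
      have t3 : Tendsto (fun s => Real.exp s + q) (nhds s0) (nhds ((q + r) + q)) := by
        rw [← he]; exact (Real.continuous_exp.add continuous_const).tendsto s0
      have h2ev : ∀ᶠ s in nhds s0, q < r + Real.exp s :=
        t2.eventually (eventually_gt_nhds (by linarith))
      have h3ev : ∀ᶠ s in nhds s0, r < Real.exp s + q :=
        t3.eventually (eventually_gt_nhds (by linarith))
      filter_upwards [h2ev.filter_mono nhdsWithin_le_nhds,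
        h3ev.filter_mono nhdsWithin_le_nhds, self_mem_nhdsWithin] with s hs2 hs3 hs1
      have hd1 : Real.exp s < q + r := by
        rw [← he]; exact Real.exp_lt_exp.2 hs1
      exact key_nondeg s y2 y3 x1 x2 x3 hx1 hx2 hx3 hxs (by rw [← hqd, ← hrd]; exact hd1)
        (by rw [← hqd, ← hrd]; exact hs2) (by rw [← hqd, ← hrd]; exact hs3)
    have hlhs : Tendsto (fun s => Lob x1 + Lob x2 + Lob x3 + (x1*s + x2*y2 + x3*y3))
        (nhdsWithin s0 (Iio s0)) (nhds (Lob x1 + Lob x2 + Lob x3 + (x1*s0 + x2*y2 + x3*y3))) := by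
      apply Tendsto.mono_left ?_ nhdsWithin_le_nhds
      exact (Continuous.tendsto (by fun_prop) s0)
    have hrhs : Tendsto (fun s => GR s y2 y3) (nhdsWithin s0 (Iio s0)) (nhds (GR s0 y2 y3)) :=
      ((cont_GR_left y2 y3).tendsto s0).mono_left nhdsWithin_le_nhds
    exact le_of_tendsto_of_tendsto hlhs hrhs hev
  -- Step A : monotone extension
  have hs0le : s0 ≤ y1 := by
    rw [hs0d, ← Real.log_exp y1]
    exact Real.log_le_log (by positivity) hdeg
  have hx1le : x1 ≤ π := by linarith
  have hGRy1 : GR y1 y2 y3 = Lob π + Lob 0 + Lob 0 + π * y1 := hGR y1 hdeg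
  have hGRs0 : GR s0 y2 y3 = Lob π + Lob 0 + Lob 0 + π * s0 := hGR s0 (le_of_eq he.symm)
  rw [hGRy1]
  rw [hGRs0] at hB
  nlinarith [mul_le_mul_of_nonneg_left hs0le hx1]
end KeyAux


namespace KeyAux

lemma key_scalar (y1 y2 y3 x1 x2 x3 : ℝ)
    (hx1 : 0 ≤ x1) (hx2 : 0 ≤ x2) (hx3 : 0 ≤ x3) (hxs : x1 + x2 + x3 = π) :
    Lob x1 + Lob x2 + Lob x3 + (x1*y1 + x2*y2 + x3*y3) ≤ GR y1 y2 y3 := by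
  by_cases h1 : Real.exp y2 + Real.exp y3 ≤ Real.exp y1
  · exact key_deg1 y1 y2 y3 x1 x2 x3 hx1 hx2 hx3 hxs h1
  by_cases h2 : Real.exp y3 + Real.exp y1 ≤ Real.exp y2
  · have := key_deg1 y2 y3 y1 x2 x3 x1 hx2 hx3 hx1 (by linarith) h2
    rw [← GR_cyc y1 y2 y3] at this
    linarith
  by_cases h3 : Real.exp y1 + Real.exp y2 ≤ Real.exp y3
  · have := key_deg1 y3 y1 y2 x3 x1 x2 hx3 hx1 hx2 (by linarith) h3
    rw [GR_cyc y3 y1 y2] at this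
    linarith
  · push_neg at h1 h2 h3
    exact key_nondeg y1 y2 y3 x1 x2 x3 hx1 hx2 hx3 hxs h1 h2 h3

/-- The angle vector. -/
noncomputable def A (y : Fin 3 → ℝ) (i : Fin 3) : ℝ := ang i (fun m => Real.exp (y m))

lemma ang0_eq (x : Fin 3 → ℝ) : ang 0 x = angR (x 0) (x 1) (x 2) := rfl
lemma ang1_eq (x : Fin 3 → ℝ) : ang 1 x = angR (x 1) (x 2) (x 0) := rfl
lemma ang2_eq (x : Fin 3 → ℝ) : ang 2 x = angR (x 2) (x 0) (x 1) := rfl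

lemma Gfn_eq_GR (y : Fin 3 → ℝ) : Gfn y = GR (y 0) (y 1) (y 2) := by
  rw [Gfn, Fin.sum_univ_three, ang0_eq, ang1_eq, ang2_eq, GR]
  ring

lemma ang_eq (i : Fin 3) (x : Fin 3 → ℝ) : ang i x = angR (x i) (x (i+1)) (x (i+2)) := rfl

lemma A_mem (y : Fin 3 → ℝ) (i : Fin 3) : A y i ∈ Icc 0 π := by
  rw [A, ang_eq]; exact angR_mem

lemma A_sum (y : Fin 3 → ℝ) : A y 0 + A y 1 + A y 2 = π := by
  rw [A, A, A, ang0_eq, ang1_eq, ang2_eq]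
  set p := Real.exp (y 0) with hpd
  set q := Real.exp (y 1) with hqd
  set r := Real.exp (y 2) with hrd
  have hp : 0 < p := Real.exp_pos _
  have hq : 0 < q := Real.exp_pos _
  have hr : 0 < r := Real.exp_pos _
  by_cases h1 : q + r ≤ p
  · obtain ⟨e1, e2, e3⟩ := angR_deg hq hr h1
    rw [e1, e2, e3]; ring
  by_cases h2 : r + p ≤ q
  · obtain ⟨e1, e2, e3⟩ := angR_deg hr hp h2
    rw [e1, e2, e3]; ring
  by_cases h3 : p + q ≤ r
  · obtain ⟨e1, e2, e3⟩ := angR_deg hp hq h3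
    rw [e1, e2, e3]; ring
  · push_neg at h1 h2 h3
    exact angR_sum hp hq hr h1 h2 h3

lemma Gfn_expand (y : Fin 3 → ℝ) :
    Gfn y = Lob (A y 0) + Lob (A y 1) + Lob (A y 2) +
      (A y 0 * y 0 + A y 1 * y 1 + A y 2 * y 2) := by
  rw [Gfn, Fin.sum_univ_three]
  simp only [A]
  ring

lemma key_main (y x : Fin 3 → ℝ) (hx : ∀ i, 0 ≤ x i) (hxs : x 0 + x 1 + x 2 = π) :
    Lob (x 0) + Lob (x 1) + Lob (x 2) + (x 0 * y 0 + x 1 * y 1 + x 2 * y 2) ≤ Gfn y := by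
  rw [Gfn_eq_GR]
  exact key_scalar (y 0) (y 1) (y 2) (x 0) (x 1) (x 2) (hx 0) (hx 1) (hx 2) hxs

lemma subgrad (y z : Fin 3 → ℝ) :
    Gfn y + (A y 0 * (z 0 - y 0) + A y 1 * (z 1 - y 1) + A y 2 * (z 2 - y 2)) ≤ Gfn z := by
  have h := key_main z (A y) (fun i => (A_mem y i).1) (A_sum y)
  have h2 := Gfn_expand y
  linarith

lemma A_continuous (i : Fin 3) : Continuous (fun y : Fin 3 → ℝ => A y i) := by
  have hc : ∀ j : Fin 3, Continuous (fun y : Fin 3 → ℝ => Real.exp (y j)) :=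
    fun j => Real.continuous_exp.comp (continuous_apply j)
  have hp : ∀ (j : Fin 3) (y : Fin 3 → ℝ), 0 < Real.exp (y j) := fun _ _ => Real.exp_pos _
  simp only [A, ang_eq]
  exact cont_angR_comp (hc i) (hc (i+1)) (hc (i+2)) (hp (i+1)) (hp (i+2))

end KeyAux



namespace KeyAux
/-- The candidate derivative. -/
noncomputable def Lmap (y : Fin 3 → ℝ) : (Fin 3 → ℝ) →L[ℝ] ℝ :=
  ∑ i : Fin 3, A y i • (ContinuousLinearMap.proj i)

lemma Lmap_apply (y v : Fin 3 → ℝ) :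
    Lmap y v = A y 0 * v 0 + A y 1 * v 1 + A y 2 * v 2 := by
  simp [Lmap, ContinuousLinearMap.sum_apply, Fin.sum_univ_three]

lemma sup_eq (y : Fin 3 → ℝ) :
    (⨆ x : Fin 3 → ℝ, (((∑ i : Fin 3, x i * y i : ℝ) : EReal) - phiFn x)) =
      ((Gfn y : ℝ) : EReal) := by
  apply le_antisymm
  · apply iSup_le
    intro x
    by_cases hx : (∀ i, 0 ≤ x i) ∧ x 0 + x 1 + x 2 = Real.pi
    · rw [phiFn, if_pos hx, ← EReal.coe_sub, EReal.coe_le_coe_iff]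
      have := key_main y x hx.1 hx.2
      rw [Fin.sum_univ_three]
      linarith
    · rw [phiFn, if_neg hx, EReal.sub_top]
      exact bot_le
  · have hmem : (∀ i, 0 ≤ A y i) ∧ A y 0 + A y 1 + A y 2 = Real.pi :=
      ⟨fun i => (A_mem y i).1, A_sum y⟩
    apply le_iSup_of_le (A y)
    rw [show phiFn (A y) = ((-(Lob (A y 0) + Lob (A y 1) + Lob (A y 2)) : ℝ) : EReal) from
      if_pos hmem, ← EReal.coe_sub, EReal.coe_le_coe_iff, Fin.sum_univ_three, Gfn_expand y]
    ring_nf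
    exact le_refl _

lemma gfn_convex : ConvexOn ℝ Set.univ Gfn := by
  refine ⟨convex_univ, fun p _ q _ a b ha hb hab => ?_⟩
  set w := a • p + b • q with hwd
  have hw : ∀ i, w i = a * p i + b * q i := by
    intro i
    simp [hwd, Pi.add_apply, Pi.smul_apply, smul_eq_mul]
  have h1 := subgrad w p
  have h2 := subgrad w q
  have h1' := mul_le_mul_of_nonneg_left h1 ha
  have h2' := mul_le_mul_of_nonneg_left h2 hb
  have e : a * (Gfn w + (A w 0 * (p 0 - w 0) + A w 1 * (p 1 - w 1) + A w 2 * (p 2 - w 2))) +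
      b * (Gfn w + (A w 0 * (q 0 - w 0) + A w 1 * (q 1 - w 1) + A w 2 * (q 2 - w 2))) =
      Gfn w := by
    rw [hw 0, hw 1, hw 2]
    linear_combination (Gfn w - (A w 0 * (a * p 0 + b * q 0) + A w 1 * (a * p 1 + b * q 1) +
      A w 2 * (a * p 2 + b * q 2))) * hab
  calc Gfn w ≤ a * Gfn p + b * Gfn q := by rw [← e]; exact add_le_add h1' h2'
    _ = a • Gfn p + b • Gfn q := by simp [smul_eq_mul]

lemma gfn_hasFDerivAt (y : Fin 3 → ℝ) : HasFDerivAt Gfn (Lmap y) y := by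
  rw [hasFDerivAt_iff_isLittleO_nhds_zero]
  rw [Asymptotics.isLittleO_iff]
  intro ε hε
  have hAc : ∀ i : Fin 3, ∀ᶠ h : Fin 3 → ℝ in nhds 0, |A (y + h) i - A y i| ≤ ε/3 := by
    intro i
    have hc : ContinuousAt (fun h : Fin 3 → ℝ => A (y + h) i) 0 :=
      ((A_continuous i).comp (continuous_const.add continuous_id)).continuousAt
    have h0 : A (y + 0) i = A y i := by rw [add_zero]
    have := Metric.tendsto_nhds.1 hc.tendsto (ε/3) (by positivity)
    filter_upwards [this] with h hh
    rw [Real.dist_eq, h0] at hh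
    exact hh.le
  filter_upwards [hAc 0, hAc 1, hAc 2] with h e0 e1 e2
  set z := y + h with hzd
  have hz : ∀ i, z i - y i = h i := by intro i; simp [hzd]
  have hlow : 0 ≤ Gfn z - Gfn y - Lmap y h := by
    have := subgrad y z
    rw [Lmap_apply, ← hz 0, ← hz 1, ← hz 2]
    linarith
  have hnorm : ∀ i : Fin 3, |h i| ≤ ‖h‖ := by
    intro i
    have := norm_le_pi_norm h i
    simpa [Real.norm_eq_abs] using this
  have hup : Gfn z - Gfn y - Lmap y h ≤
      (A z 0 - A y 0) * h 0 + (A z 1 - A y 1) * h 1 + (A z 2 - A y 2) * h 2 := by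
    have := subgrad z y
    rw [Lmap_apply, ← hz 0, ← hz 1, ← hz 2]
    have hy : ∀ i, y i - z i = -(z i - y i) := by intro i; ring
    linarith [this]
  have hterm : ∀ i : Fin 3, |A (y + h) i - A y i| ≤ ε/3 →
      (A z i - A y i) * h i ≤ ε/3 * ‖h‖ := by
    intro i hi
    calc (A z i - A y i) * h i ≤ |(A z i - A y i) * h i| := le_abs_self _
      _ = |A z i - A y i| * |h i| := abs_mul _ _
      _ ≤ (ε/3) * ‖h‖ := by
          apply mul_le_mul hi (hnorm i) (abs_nonneg _) (by positivity)
  have hb0 := hterm 0 e0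
  have hb1 := hterm 1 e1
  have hb2 := hterm 2 e2
  rw [Real.norm_eq_abs, abs_of_nonneg hlow]
  calc Gfn z - Gfn y - Lmap y h ≤
      (A z 0 - A y 0) * h 0 + (A z 1 - A y 1) * h 1 + (A z 2 - A y 2) * h 2 := hup
    _ ≤ ε/3 * ‖h‖ + ε/3 * ‖h‖ + ε/3 * ‖h‖ := by linarith
    _ = ε * ‖h‖ := by ring

lemma gfn_fderiv (y : Fin 3 → ℝ) : fderiv ℝ Gfn y = Lmap y := (gfn_hasFDerivAt y).fderiv

lemma gfn_contDiff : ContDiff ℝ 1 Gfn := by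
  rw [contDiff_one_iff_fderiv]
  constructor
  · exact fun y => (gfn_hasFDerivAt y).differentiableAt
  · have : (fderiv ℝ Gfn) = fun y => Lmap y := funext gfn_fderiv
    rw [this]
    apply continuous_finset_sum
    intro i _
    exact (A_continuous i).smul continuous_const

lemma gfn_fderiv_single (y : Fin 3 → ℝ) (i : Fin 3) :
    fderiv ℝ Gfn y (Pi.single i 1) = A y i := by
  rw [gfn_fderiv y]
  have : Lmap y (Pi.single i 1) = ∑ j : Fin 3, A y j * (Pi.single i 1 : Fin 3 → ℝ) j := by
    simp [Lmap, ContinuousLinearMap.sum_apply]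
  rw [this]
  simp [Pi.single_apply, mul_ite, mul_one, mul_zero]

end KeyAux

end Aux

theorem stmt5 :
    (∀ y : Fin 3 → ℝ,
      (⨆ x : Fin 3 → ℝ, (((∑ i : Fin 3, x i * y i : ℝ) : EReal) - phiFn x)) =
        ((Gfn y : ℝ) : EReal)) ∧
    ConvexOn ℝ Set.univ Gfn ∧ ContDiff ℝ 1 Gfn ∧
    ∀ y : Fin 3 → ℝ, ∀ i : Fin 3,
      fderiv ℝ Gfn y (Pi.single i 1) = ang i (fun m => Real.exp (y m)) := by
  refine ⟨KeyAux.sup_eq, KeyAux.gfn_convex, KeyAux.gfn_contDiff, fun y i => ?_⟩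
  exact KeyAux.gfn_fderiv_single y i
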